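/- For every positive integer r and every real x with 0 ≤ x ≤ 2π, ∑_{n=1}^∞ cos(nx)/n^{2r} = ∑_{k=0}^{r−1} (−1)^k x^{2k} ζ(2r−2k)/(2k)! + (−1)^r ( (π/2)·x^{2r−1}/(2r−1)! − (1/2)·x^{2r}/(2r)! ). -/

import Mathlib

open Real

open scoped Nat

/-- The Riemann zeta function at natural arguments `s > 1`, as a real series. -/
noncomputable def zetaR (s : ℕ) : ℝ := ∑' n : ℕ, 1 / (n + 1 : ℝ) ^ s

lemma sum_range_two_mul' (f : ℕ → ℝ) (m : ℕ) :
    ∑ i ∈ Finset.range (2 * m), f i = ∑ j ∈ Finset.range m, (f (2 * j) + f (2 * j + 1)) := by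
  induction m with
  | zero => simp
  | succ m ih =>
    rw [show 2 * (m + 1) = 2 * m + 1 + 1 by ring, Finset.sum_range_succ, Finset.sum_range_succ,
      ih, Finset.sum_range_succ]
    ring

lemma hasSum_zetaR (k : ℕ) (hk : k ≠ 0) :
    HasSum (fun n : ℕ => 1 / (n + 1 : ℝ) ^ (2 * k))
      ((-1 : ℝ) ^ (k + 1) * (2 * π) ^ (2 * k) * bernoulli (2 * k) / (2 * (2 * k)!)) := by
  have h := hasSum_zeta_nat hk
  have h0 : (1 : ℝ) / (0 : ℕ) ^ (2 * k) = 0 := by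
    rw [Nat.cast_zero, zero_pow (by positivity), div_zero]
  have h2 : ((-1 : ℝ) ^ (k + 1) * (2:ℝ) ^ (2 * k - 1) * π ^ (2 * k) * bernoulli (2 * k) / (2 * k)!)
      = (-1 : ℝ) ^ (k + 1) * (2 * π) ^ (2 * k) * bernoulli (2 * k) / (2 * (2 * k)!) := by
    have e : (2:ℝ) ^ (2 * k) = 2 ^ (2 * k - 1) * 2 := by rw [← pow_succ]; congr 1; omega
    rw [mul_pow, e]
    ring
  rw [h2] at h
  have h3 := (hasSum_nat_add_iff' (f := fun n : ℕ => 1 / (n : ℝ) ^ (2 * k)) 1).mpr h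
  simp only [Finset.sum_range_one, h0, sub_zero] at h3
  convert h3 using 2 with n
  case e'_3 => rfl
  push_cast; ring_nf

lemma zetaR_two_mul (k : ℕ) (hk : k ≠ 0) :
    zetaR (2 * k) = (-1 : ℝ) ^ (k + 1) * (2 * π) ^ (2 * k) * bernoulli (2 * k) / (2 * (2 * k)!) :=
  (hasSum_zetaR k hk).tsum_eq

lemma bernoulli_odd_zero {n : ℕ} (h : Odd n) (h1 : 1 < n) : _root_.bernoulli n = 0 := by
  rw [bernoulli_eq_bernoulli'_of_ne_one (by omega), bernoulli'_eq_zero_of_odd h h1]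

lemma term_eq (j m : ℕ) (x : ℝ) :
    (-1 : ℝ) ^ (j + 1 + m + 1) * (2 * π) ^ (2 * (j + 1 + m)) / 2 / (2 * (j + 1 + m))! *
      (((bernoulli (2 * (j + 1)) : ℚ) : ℝ) * (Nat.choose (2 * (j + 1 + m)) (2 * (j + 1)))
        * (x / (2 * π)) ^ (2 * (j + 1 + m) - 2 * (j + 1)))
    = (-1 : ℝ) ^ m * x ^ (2 * m) * zetaR (2 * (j + 1 + m) - 2 * m) / (2 * m)! := by
  have h1 : 2 * (j + 1 + m) - 2 * m = 2 * (j + 1) := by omega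
  have h2 : 2 * (j + 1 + m) - 2 * (j + 1) = 2 * m := by omega
  rw [h1, h2, zetaR_two_mul (j + 1) (Nat.succ_ne_zero j)]
  have hc : ((Nat.choose (2 * (j + 1 + m)) (2 * (j + 1)) : ℝ)) * (2 * (j + 1))! * (2 * m)!
      = ((2 * (j + 1 + m))! : ℝ) := by
    have h := Nat.choose_mul_factorial_mul_factorial
      (by omega : 2 * (j + 1) ≤ 2 * (j + 1 + m))
    rw [h2] at h
    exact_mod_cast congrArg (Nat.cast (R := ℝ)) h
  have hea : 2 * (j + 1 + m) = 2 * (j + 1) + 2 * m := by ring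
  rw [hea, pow_add, div_pow]
  have hπ : (2 * π : ℝ) ≠ 0 := by positivity
  have hf1 : ((2 * (j + 1) + 2 * m)! : ℝ) ≠ 0 := Nat.cast_ne_zero.mpr (Nat.factorial_ne_zero _)
  have hf2 : ((2 * (j + 1))! : ℝ) ≠ 0 := Nat.cast_ne_zero.mpr (Nat.factorial_ne_zero _)
  have hf3 : ((2 * m)! : ℝ) ≠ 0 := Nat.cast_ne_zero.mpr (Nat.factorial_ne_zero _)
  rw [hea] at hc
  field_simp
  rw [← hc]
  ring

lemma tail_eq (s : ℕ) (x : ℝ) :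
    (-1 : ℝ) ^ (s + 1 + 1) * (2 * π) ^ (2 * (s + 1)) / 2 / (2 * (s + 1))! *
        ((x / (2 * π)) ^ (2 * (s + 1)) +
          ((bernoulli 1 : ℚ) : ℝ) * (Nat.choose (2 * (s + 1)) 1) * (x / (2 * π)) ^ (2 * (s + 1) - 1))
    = (-1 : ℝ) ^ (s + 1) *
        (π / 2 * x ^ (2 * (s + 1) - 1) / (2 * (s + 1) - 1)! -
          1 / 2 * x ^ (2 * (s + 1)) / (2 * (s + 1))!) := by
  have h1 : 2 * (s + 1) - 1 = 2 * s + 1 := by omega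
  have h2 : 2 * (s + 1) = 2 * s + 1 + 1 := by omega
  rw [h1, h2, _root_.bernoulli_one]
  have hfac : ((2 * s + 1 + 1)! : ℝ) = (2 * s + 1 + 1) * (2 * s + 1)! := by
    exact_mod_cast congrArg (Nat.cast (R := ℝ)) (Nat.factorial_succ (2 * s + 1))
  have hch : ((2 * s + 1 + 1).choose 1 : ℝ) = (2 * s + 1 + 1 : ℕ) := by
    exact_mod_cast congrArg (Nat.cast (R := ℝ)) (Nat.choose_one_right (2 * s + 1 + 1))
  have hπ : (2 * π : ℝ) ≠ 0 := by positivity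
  have hf1 : ((2 * s + 1)! : ℝ) ≠ 0 := Nat.cast_ne_zero.mpr (Nat.factorial_ne_zero _)
  rw [hfac, hch, div_pow, div_pow]
  have e1 : (2 * π : ℝ) ^ (2 * s + 1 + 1) = (2 * π) ^ (2 * s + 1) * (2 * π) := pow_succ _ _
  have e2 : (x : ℝ) ^ (2 * s + 1 + 1) = x ^ (2 * s + 1) * x := pow_succ _ _
  rw [e1, e2]
  have hπp : ((2 * π : ℝ) ^ (2 * s + 1)) ≠ 0 := by positivity
  push_cast
  field_simp
  ring

lemma key (r : ℕ) (hr : 0 < r) (x : ℝ) :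
    (-1 : ℝ) ^ (r + 1) * (2 * π) ^ (2 * r) / 2 / (2 * r)! *
      (Polynomial.map (algebraMap ℚ ℝ) (Polynomial.bernoulli (2 * r))).eval (x / (2 * π))
    = (∑ k ∈ Finset.range r,
          (-1 : ℝ) ^ k * x ^ (2 * k) * zetaR (2 * r - 2 * k) / (2 * k)!)
        + (-1 : ℝ) ^ r *
          (π / 2 * x ^ (2 * r - 1) / (2 * r - 1)! - 1 / 2 * x ^ (2 * r) / (2 * r)!) := by
  set y := x / (2 * π) with hy
  set F : ℕ → ℝ := fun i => ((bernoulli i : ℚ) : ℝ) * (Nat.choose (2 * r) i) * y ^ (2 * r - i)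
    with hF
  have heval : (Polynomial.map (algebraMap ℚ ℝ) (Polynomial.bernoulli (2 * r))).eval y
      = ∑ i ∈ Finset.range (2 * r + 1), F i := by
    rw [Polynomial.bernoulli, Polynomial.map_sum, Polynomial.eval_finset_sum]
    refine Finset.sum_congr rfl fun i _ => ?_
    rw [Polynomial.map_monomial, Polynomial.eval_monomial, map_mul, eq_ratCast, map_natCast]
  have hodd : ∑ j ∈ Finset.range r, F (2 * j + 1) = F 1 := by
    rw [Finset.sum_eq_single 0 (fun j hj hj0 => by
      have hb : (bernoulli (2 * j + 1) : ℚ) = 0 := bernoulli_odd_zero ⟨j, by omega⟩ (by omega)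
      simp [hF, hb]) (fun h => absurd (Finset.mem_range.mpr hr) h)]
  have heven : ∑ j ∈ Finset.range r, F (2 * j) + F (2 * r)
      = (∑ j ∈ Finset.range r, F (2 * (j + 1))) + F 0 := by
    rw [← Finset.sum_range_succ (fun j => F (2 * j)) r,
      Finset.sum_range_succ' (fun j => F (2 * j)) r]
  have hsplit : ∑ i ∈ Finset.range (2 * r + 1), F i
      = (∑ j ∈ Finset.range r, F (2 * (j + 1))) + (F 0 + F 1) := by
    rw [Finset.sum_range_succ, sum_range_two_mul', Finset.sum_add_distrib, hodd,
      add_right_comm, heven]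
    ring
  rw [heval, hsplit, mul_add, Finset.mul_sum]
  congr 1
  · rw [← Finset.sum_range_reflect
      (fun k => (-1 : ℝ) ^ k * x ^ (2 * k) * zetaR (2 * r - 2 * k) / (2 * k)!) r]
    refine Finset.sum_congr rfl fun j hj => ?_
    have hjr := Finset.mem_range.mp hj
    obtain ⟨m, rfl⟩ : ∃ m, r = j + 1 + m := ⟨r - 1 - j, by omega⟩
    have hm : j + 1 + m - 1 - j = m := by omega
    rw [hm, hF, hy]
    exact term_eq j m x
  · obtain ⟨s, rfl⟩ : ∃ s, r = s + 1 := ⟨r - 1, by omega⟩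
    have h0 : F 0 = y ^ (2 * (s + 1)) := by
      simp [hF]
    have h1 : F 1 = ((bernoulli 1 : ℚ) : ℝ) * (Nat.choose (2 * (s + 1)) 1)
        * y ^ (2 * (s + 1) - 1) := rfl
    rw [h0, h1, hy]
    exact tail_eq s x

theorem stmt_2 (r : ℕ) (hr : 0 < r) (x : ℝ) (hx0 : 0 ≤ x) (hx : x ≤ 2 * π) :
    HasSum (fun n : ℕ => Real.cos ((n + 1 : ℝ) * x) / (n + 1 : ℝ) ^ (2 * r))
      ((∑ k ∈ Finset.range r,
          (-1 : ℝ) ^ k * x ^ (2 * k) * zetaR (2 * r - 2 * k) / (Nat.factorial (2 * k)))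
        + (-1 : ℝ) ^ r *
          (π / 2 * x ^ (2 * r - 1) / (Nat.factorial (2 * r - 1))
            - 1 / 2 * x ^ (2 * r) / (Nat.factorial (2 * r)))) := by
  have hπ : (0 : ℝ) < π := pi_pos
  have hy01 : x / (2 * π) ∈ Set.Icc (0 : ℝ) 1 :=
    ⟨by positivity, by rw [div_le_one (by positivity)]; exact hx⟩
  have h := hasSum_one_div_nat_pow_mul_cos (k := r) hr.ne' hy01
  have harg : ∀ n : ℕ, 2 * π * n * (x / (2 * π)) = n * x := by
    intro n; field_simp
  simp_rw [harg] at h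
  rw [key r hr x] at h
  have h2 := (hasSum_nat_add_iff'
    (f := fun n : ℕ => 1 / (n : ℝ) ^ (2 * r) * Real.cos (n * x)) 1).mpr h
  have h0 : (1 : ℝ) / ((0 : ℕ) : ℝ) ^ (2 * r) * Real.cos ((0 : ℕ) * x) = 0 := by
    rw [Nat.cast_zero, zero_pow (by omega), div_zero, zero_mul]
  simp only [Finset.sum_range_one, h0, sub_zero] at h2
  convert h2 using 2 with n
  case e'_3 => rfl
  push_cast
  ring
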